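/- arXiv:2510.23490 — 2 statements merged into one kernel-verified Lean document; each statement's English description precedes it below -/
import Mathlib

section
/- If the instance 𝕋 = [l, r, Π] is positive (l ≃_Π r) and D is a perfect structure, then there exists a vertex s of D such that a →^l s and a →^r s; in particular D satisfies the diamond query ∃x ∃y (A(x) ∧ x →^l y ∧ x →^r y). -/
/-- The smallest equivalence relation on words over `α` generated by
`w ++ lᵢ ++ v ≃ w ++ rᵢ ++ v` for pairs `(lᵢ, rᵢ) ∈ P`. -/
def ThueEq {α : Type} (P : List (List α × List α)) : List α → List α → Prop :=
  Relation.EqvGen (fun u v => ∃ x y p, p ∈ P ∧ u = x ++ p.1 ++ y ∧ v = x ++ p.2 ++ y)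

/-- `LPath E w s t`: there is a path from `s` to `t` whose edges are labeled by the word `w`. -/
def LPath {α V : Type} (E : α → V → V → Prop) : List α → V → V → Prop
  | [] => fun s t => s = t
  | R :: w => fun s t => ∃ u, E R s u ∧ LPath E w u t

lemma lpath_append {α V : Type} (E : α → V → V → Prop) (u v : List α) (s t : V) :
    LPath E (u ++ v) s t ↔ ∃ m, LPath E u s m ∧ LPath E v m t := by
  induction u generalizing s with
  | nil =>
    constructor
    · intro h; exact ⟨s, rfl, h⟩
    · rintro ⟨m, rfl, h⟩; exact h
  | cons R u ih =>
    constructor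
    · rintro ⟨w, hE, h⟩
      obtain ⟨m, h1, h2⟩ := (ih w).mp h
      exact ⟨m, ⟨w, hE, h1⟩, h2⟩
    · rintro ⟨m, ⟨w, hE, h1⟩, h2⟩
      exact ⟨w, hE, (ih w).mpr ⟨m, h1, h2⟩⟩

lemma lpath_ext {α V : Type} (E : α → V → V → Prop)
    (p3 : ∀ s t R S, E R s t → ∃ u, E S t u) :
    ∀ (w : List α) (R : α) (s t : V), E R s t → ∃ u, LPath E w t u := by
  intro w
  induction w with
  | nil => intro R s t _; exact ⟨t, rfl⟩
  | cons S w ih =>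
    intro R s t h
    obtain ⟨u, hu⟩ := p3 s t R S h
    obtain ⟨v, hv⟩ := ih S t u hu
    exact ⟨v, u, hu, hv⟩

theorem perfect_diamond_of_positive {α V : Type} [Fintype α]
    (P : List (List α × List α)) (l r : List α)
    (hl : l ≠ []) (hr : r ≠ []) (hP : ∀ p ∈ P, p.1 ≠ [] ∧ p.2 ≠ [])
    (E : α → V → V → Prop) (Ap : V → Prop) (a : V)
    (p1 : Ap a)
    (p2 : ∀ s, Ap s → ∀ S, ∃ t, E S s t)
    (p3 : ∀ s t R S, E R s t → ∃ u, E S t u)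
    (hperf : ∀ w s t, LPath E w a s → ∀ p ∈ P, (LPath E p.1 s t ↔ LPath E p.2 s t))
    (hpos : ThueEq P l r) :
    (∃ s, LPath E l a s ∧ LPath E r a s) ∧
    (∃ x y, Ap x ∧ LPath E l x y ∧ LPath E r x y) := by
  -- equivalence of paths from `a` under ThueEq
  have key : ∀ u v, ThueEq P u v → ∀ t, LPath E u a t ↔ LPath E v a t := by
    intro u v h
    induction h with
    | rel u v huv =>
      intro t
      obtain ⟨x, y, p, hp, rfl, rfl⟩ := huv
      simp only [lpath_append]
      constructor
      · rintro ⟨m, ⟨m', hx, h1⟩, h2⟩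
        exact ⟨m, ⟨m', hx, (hperf x m' m hx p hp).mp h1⟩, h2⟩
      · rintro ⟨m, ⟨m', hx, h1⟩, h2⟩
        exact ⟨m, ⟨m', hx, (hperf x m' m hx p hp).mpr h1⟩, h2⟩
    | refl u => intro t; rfl
    | symm u v _ ih => intro t; exact (ih t).symm
    | trans u v w _ _ ih1 ih2 => intro t; exact (ih1 t).trans (ih2 t)
  -- existence of a path labeled `l` from `a`
  have hex : ∃ s, LPath E l a s := by
    cases l with
    | nil => exact ⟨a, rfl⟩
    | cons R w =>
      obtain ⟨t, ht⟩ := p2 a p1 R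
      obtain ⟨u, hu⟩ := lpath_ext E p3 w R a t ht
      exact ⟨u, t, ht, hu⟩
  obtain ⟨s, hs⟩ := hex
  have hrs : LPath E r a s := (key l r hpos s).mp hs
  exact ⟨⟨s, hs, hrs⟩, ⟨a, s, p1, hs, hrs⟩⟩
end

section
/- In the canonical structure 𝔻, no query γ_i is satisfied: there is no vertex s of 𝔻, no index 1 ≤ i ≤ k, and no pair of distinct vertices y ≠ y' such that s →^{l_i} y and s →^{r_i} y'. -/
def thueSetoid {α : Type} (P : List (List α × List α)) : Setoid (List α) :=
  ⟨ThueEq P, Relation.EqvGen.is_equivalence _⟩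

/-- Vertices of the canonical structure 𝔻 : equivalence classes of words. -/
def DVert {α : Type} (P : List (List α × List α)) : Type := Quotient (thueSetoid P)

/-- Edges of 𝔻 : `R([w],[v])` iff `wR ≃_Π v`. -/
def DEdge {α : Type} (P : List (List α × List α)) (R : α) (s t : DVert P) : Prop :=
  ∃ w v, s = Quotient.mk (thueSetoid P) w ∧ t = Quotient.mk (thueSetoid P) v ∧
    ThueEq P (w ++ [R]) v

/-- The unary predicate of 𝔻 : `A([w])` iff `w ≃_Π ε`. -/
def DA {α : Type} (P : List (List α × List α)) (s : DVert P) : Prop :=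
  ∃ w, s = Quotient.mk (thueSetoid P) w ∧ ThueEq P w []

theorem thue_append_right {α : Type} (P : List (List α × List α)) {u v : List α}
    (h : ThueEq P u v) (z : List α) : ThueEq P (u ++ z) (v ++ z) := by
  induction h with
  | rel a b hab =>
      obtain ⟨x, y, p, hp, rfl, rfl⟩ := hab
      exact Relation.EqvGen.rel _ _ ⟨x, y ++ z, p, hp, by simp, by simp⟩
  | refl a => exact Relation.EqvGen.refl _
  | symm a b _ ih => exact Relation.EqvGen.symm _ _ ih
  | trans a b c _ _ ih1 ih2 => exact Relation.EqvGen.trans _ _ _ ih1 ih2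

theorem lpath_class {α : Type} (P : List (List α × List α)) (u : List α) :
    ∀ (w : List α) (t : DVert P), LPath (DEdge P) u (Quotient.mk (thueSetoid P) w) t →
      t = Quotient.mk (thueSetoid P) (w ++ u) := by
  induction u with
  | nil => intro w t h; simpa [LPath] using h.symm
  | cons R u ih =>
      rintro w t ⟨m, ⟨w', v, hs, rfl, hth⟩, hpath⟩
      have hww' : ThueEq P w w' := Quotient.exact hs
      have hm : Quotient.mk (thueSetoid P) v = Quotient.mk (thueSetoid P) (w ++ [R]) :=
        Quotient.sound (Relation.EqvGen.symm _ _
          (Relation.EqvGen.trans _ _ _ (thue_append_right P hww' [R]) hth))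
      rw [hm] at hpath
      have := ih (w ++ [R]) t hpath
      simpa using this

theorem canonical_no_gamma {α : Type} [Fintype α] (P : List (List α × List α)) :
    ¬ ∃ (s : DVert P), ∃ p ∈ P, ∃ y y' : DVert P,
      y ≠ y' ∧ LPath (DEdge P) p.1 s y ∧ LPath (DEdge P) p.2 s y' := by
  rintro ⟨s, p, hp, y, y', hne, h1, h2⟩
  obtain ⟨w, rfl⟩ := Quotient.exists_rep s
  have hy := lpath_class P p.1 w y h1
  have hy' := lpath_class P p.2 w y' h2
  apply hne
  rw [hy, hy']
  exact Quotient.sound (Relation.EqvGen.rel _ _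
    ⟨w, [], p, hp, by simp, by simp⟩)
end
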